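/- Let F(w) = a₋₁ w^{−α} + a₀ + Σ_{i=1}^N a_i w^{α_i} with α ∈ (0,1), 0 < α₁ < ⋯ < α_N and nonnegative coefficients, and let x, y ∈ ℝ^d with the origin not on the segment [y, x]. Then for γ(τ) = τx + (1−τ)y, ∫₀¹ F(|γ(τ)|) |x−y|² (1−α) dτ ≥ a_*(1−α)|x−y|^{α_N+2} / (2^{α_N+1}(α_N+1)), provided a_N ≥ a_* > 0. -/

import Mathlib

open intervalIntegral Real

lemma abs_int (β : ℝ) (hβ : 0 ≤ β) (c : ℝ) :
    ((1:ℝ)/2) ^ (β+1) / (β+1) ≤ ∫ τ in (0:ℝ)..1, |τ - c| ^ β := by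
  have hβ1 : (0:ℝ) < β + 1 := by linarith
  have hcont : Continuous fun τ : ℝ => |τ - c| ^ β :=
    (continuous_abs.comp (continuous_id.sub continuous_const)).rpow_const (fun x => Or.inr hβ)
  have hint : ∀ a b : ℝ, IntervalIntegrable (fun τ => |τ - c| ^ β) MeasureTheory.volume a b :=
    fun a b => hcont.intervalIntegrable a b
  have base : ∫ s in (0:ℝ)..(1/2), s ^ β = ((1:ℝ)/2) ^ (β+1) / (β+1) := by
    rw [integral_rpow (Or.inl (by linarith))]
    rw [Real.zero_rpow (by linarith)]
    ring
  rcases le_or_gt c (1/2) with hc | hc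
  · have h2 : ∫ τ in (1/2:ℝ)..1, (τ - 1/2) ^ β ≤ ∫ τ in (1/2:ℝ)..1, |τ - c| ^ β := by
      apply integral_mono_on (by norm_num)
      · exact ((continuous_id.sub continuous_const).rpow_const (fun x => Or.inr hβ)).intervalIntegrable _ _
      · exact hint _ _
      · intro τ hτ
        apply Real.rpow_le_rpow (by linarith [hτ.1]) _ hβ
        calc τ - 1/2 ≤ τ - c := by linarith
        _ ≤ |τ - c| := le_abs_self _
    have h3 : ∫ τ in (1/2:ℝ)..1, (τ - 1/2) ^ β = ((1:ℝ)/2) ^ (β+1) / (β+1) := by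
      rw [integral_comp_sub_right (fun s => s ^ β) (1/2)]
      norm_num [base]
    have h4 : (0:ℝ) ≤ ∫ τ in (0:ℝ)..(1/2), |τ - c| ^ β :=
      integral_nonneg (by norm_num) (fun u _ => Real.rpow_nonneg (abs_nonneg _) _)
    have h5 := integral_add_adjacent_intervals (hint 0 (1/2)) (hint (1/2) 1)
    linarith [h2, h3.symm.le]
  · have h2 : ∫ τ in (0:ℝ)..(1/2), (1/2 - τ) ^ β ≤ ∫ τ in (0:ℝ)..(1/2), |τ - c| ^ β := by
      apply integral_mono_on (by norm_num)
      · exact ((continuous_const.sub continuous_id).rpow_const (fun x => Or.inr hβ)).intervalIntegrable _ _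
      · exact hint _ _
      · intro τ hτ
        apply Real.rpow_le_rpow (by linarith [hτ.2]) _ hβ
        rw [abs_sub_comm]
        calc 1/2 - τ ≤ c - τ := by linarith
        _ ≤ |c - τ| := le_abs_self _
    have h3 : ∫ τ in (0:ℝ)..(1/2), ((1:ℝ)/2 - τ) ^ β = ((1:ℝ)/2) ^ (β+1) / (β+1) := by
      rw [integral_comp_sub_left (fun s => s ^ β) (1/2)]
      norm_num [base]
    have h4 : (0:ℝ) ≤ ∫ τ in (1/2:ℝ)..1, |τ - c| ^ β :=
      integral_nonneg (by norm_num) (fun u _ => Real.rpow_nonneg (abs_nonneg _) _)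
    have h5 := integral_add_adjacent_intervals (hint 0 (1/2)) (hint (1/2) 1)
    linarith [h2, h3.symm.le]

lemma seg_lower {E : Type*} [NormedAddCommGroup E] [InnerProductSpace ℝ E]
    (x y : E) (hv : 0 < ‖x - y‖) (τ : ℝ) :
    |τ - (-(inner ℝ y (x - y) : ℝ) / ‖x - y‖ ^ 2)| * ‖x - y‖ ≤ ‖τ • x + (1 - τ) • y‖ := by
  set v := ‖x - y‖ with hvdef
  set c : ℝ := inner ℝ y (x - y) with hcdef
  set t0 : ℝ := -c / v ^ 2 with ht0
  have hrw : τ • x + (1 - τ) • y = y + τ • (x - y) := by module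
  have hsq : ‖y + τ • (x - y)‖ ^ 2 = ‖y‖ ^ 2 + 2 * (τ * c) + τ ^ 2 * v ^ 2 := by
    rw [norm_add_sq_real, real_inner_smul_right, norm_smul, Real.norm_eq_abs, mul_pow, sq_abs]
  have hCS : c * c ≤ ‖y‖ ^ 2 * v ^ 2 := by
    have := real_inner_mul_inner_self_le y (x - y)
    rwa [real_inner_self_eq_norm_sq, real_inner_self_eq_norm_sq] at this
  have hv2 : 0 < v ^ 2 := by positivity
  have ht0v : t0 * v ^ 2 = -c := by rw [ht0, div_mul_cancel₀ _ hv2.ne']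
  have h1 : t0 ^ 2 * v ^ 2 * v ^ 2 = c * c := by
    have h : t0 ^ 2 * v ^ 2 * v ^ 2 = (t0 * v ^ 2) * (t0 * v ^ 2) := by ring
    rw [h, ht0v]; ring
  have h6 : t0 ^ 2 * v ^ 2 ≤ ‖y‖ ^ 2 := by
    rw [← mul_le_mul_iff_of_pos_right hv2, h1]; exact hCS
  have h7 : (τ - t0) ^ 2 * v ^ 2 = τ ^ 2 * v ^ 2 - 2 * τ * (t0 * v ^ 2) + t0 ^ 2 * v ^ 2 := by
    ring
  rw [ht0v] at h7
  have hkey : (|τ - t0| * v) ^ 2 ≤ ‖y + τ • (x - y)‖ ^ 2 := by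
    rw [hsq, mul_pow, sq_abs, h7]; linarith
  rw [hrw]
  have h2 : 0 ≤ |τ - t0| * v := mul_nonneg (abs_nonneg _) hv.le
  nlinarith [norm_nonneg (y + τ • (x - y)), hkey]

theorem stmt15 (d : ℕ) (hd : 1 ≤ d) (N : ℕ) (hN : 1 ≤ N)
    (α : ℝ) (hα0 : 0 < α) (hα1 : α < 1)
    (e : Fin N → ℝ) (hmono : StrictMono e) (hepos : ∀ i, 0 < e i)
    (astar : ℝ) (hstar : 0 < astar)
    (am1 a0 : ℝ) (a : Fin N → ℝ)
    (ham1 : 0 ≤ am1) (ha0 : 0 ≤ a0) (ha : ∀ i, 0 ≤ a i)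
    (haN : astar ≤ a ⟨N - 1, by omega⟩)
    (F : ℝ → ℝ)
    (hF : F = fun w => am1 * w ^ (-α) + a0 + ∑ i, a i * w ^ (e i))
    (x y : EuclideanSpace ℝ (Fin d))
    (hseg : ∀ τ ∈ Set.Icc (0:ℝ) 1, τ • x + (1 - τ) • y ≠ 0) :
    astar * (1 - α) * ‖x - y‖ ^ (e ⟨N - 1, by omega⟩ + 2) /
        (2 ^ (e ⟨N - 1, by omega⟩ + 1) * (e ⟨N - 1, by omega⟩ + 1)) ≤
      ∫ τ in (0:ℝ)..1, F ‖τ • x + (1 - τ) • y‖ * ‖x - y‖ ^ 2 * (1 - α) := by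
  set i0 : Fin N := ⟨N - 1, by omega⟩ with hi0
  set β : ℝ := e i0 with hβdef
  have hβ : 0 < β := hepos i0
  have hα : 0 < 1 - α := by linarith
  set v : ℝ := ‖x - y‖ with hvdef
  rcases eq_or_lt_of_le (norm_nonneg (x - y)) with hv0 | hv
  · -- degenerate case x = y
    rw [← hvdef] at hv0
    simp only [← hv0, Real.zero_rpow (by linarith : β + 2 ≠ 0)]
    rw [show ((0:ℝ)) ^ 2 = 0 by norm_num]
    simp
  · rw [← hvdef] at hv
    set t0 : ℝ := -(inner ℝ y (x - y) : ℝ) / v ^ 2 with ht0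
    -- F lower bound
    have hFlow : ∀ w : ℝ, 0 < w → astar * w ^ β ≤ F w := by
      intro w hw
      rw [hF]
      have h1 : astar * w ^ β ≤ a i0 * w ^ β :=
        mul_le_mul_of_nonneg_right haN (Real.rpow_nonneg hw.le β)
      have h2 : a i0 * w ^ e i0 ≤ ∑ i, a i * w ^ e i :=
        Finset.single_le_sum (f := fun i => a i * w ^ e i)
          (fun i _ => mul_nonneg (ha i) (Real.rpow_nonneg hw.le _)) (Finset.mem_univ i0)
      have h3 : 0 ≤ am1 * w ^ (-α) := mul_nonneg ham1 (Real.rpow_nonneg hw.le _)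
      simp only
      linarith
    -- continuity facts
    have hγc : Continuous fun τ : ℝ => τ • x + (1 - τ) • y := by fun_prop
    have hγn : Continuous fun τ : ℝ => ‖τ • x + (1 - τ) • y‖ := hγc.norm
    have hne : ∀ τ ∈ Set.Icc (0:ℝ) 1, ‖τ • x + (1 - τ) • y‖ ≠ 0 := by
      intro τ hτ
      exact norm_ne_zero_iff.mpr (hseg τ hτ)
    have hgcont : ContinuousOn
        (fun τ : ℝ => F ‖τ • x + (1 - τ) • y‖ * v ^ 2 * (1 - α)) (Set.Icc 0 1) := by
      rw [hF]
      refine ContinuousOn.mul (ContinuousOn.mul ?_ continuousOn_const) continuousOn_const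
      refine ContinuousOn.add (ContinuousOn.add ?_ continuousOn_const) ?_
      · exact continuousOn_const.mul
          (hγn.continuousOn.rpow_const fun τ hτ => Or.inl (hne τ hτ))
      · exact continuousOn_finset_sum _ fun i _ =>
          continuousOn_const.mul
            (hγn.continuousOn.rpow_const fun τ hτ => Or.inr (hepos i).le)
    have hhcont : Continuous
        (fun τ : ℝ => astar * (|τ - t0| * v) ^ β * v ^ 2 * (1 - α)) := by
      refine ((continuous_const.mul ?_).mul continuous_const).mul continuous_const
      exact (((continuous_id.sub continuous_const).abs).mul continuous_const).rpow_const
        fun _ => Or.inr hβ.le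
    -- pointwise comparison
    have hpt : ∀ τ ∈ Set.Icc (0:ℝ) 1,
        astar * (|τ - t0| * v) ^ β * v ^ 2 * (1 - α)
          ≤ F ‖τ • x + (1 - τ) • y‖ * v ^ 2 * (1 - α) := by
      intro τ hτ
      have hγpos : 0 < ‖τ • x + (1 - τ) • y‖ :=
        (norm_nonneg _).lt_of_ne' (hne τ hτ)
      have hs : |τ - t0| * v ≤ ‖τ • x + (1 - τ) • y‖ := seg_lower x y hv τ
      have h1 : astar * (|τ - t0| * v) ^ β ≤ astar * ‖τ • x + (1 - τ) • y‖ ^ β :=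
        mul_le_mul_of_nonneg_left
          (Real.rpow_le_rpow (mul_nonneg (abs_nonneg _) hv.le) hs hβ.le) hstar.le
      have h2 := hFlow _ hγpos
      have hvα : 0 ≤ v ^ 2 * (1 - α) := mul_nonneg (by positivity) hα.le
      calc astar * (|τ - t0| * v) ^ β * v ^ 2 * (1 - α)
          = astar * (|τ - t0| * v) ^ β * (v ^ 2 * (1 - α)) := by ring
        _ ≤ F ‖τ • x + (1 - τ) • y‖ * (v ^ 2 * (1 - α)) :=
            mul_le_mul_of_nonneg_right (le_trans h1 h2) hvα
        _ = F ‖τ • x + (1 - τ) • y‖ * v ^ 2 * (1 - α) := by ring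
    -- integral comparison
    have huIcc : Set.uIcc (0:ℝ) 1 = Set.Icc 0 1 := Set.uIcc_of_le zero_le_one
    have hmonoInt :
        (∫ τ in (0:ℝ)..1, astar * (|τ - t0| * v) ^ β * v ^ 2 * (1 - α))
          ≤ ∫ τ in (0:ℝ)..1, F ‖τ • x + (1 - τ) • y‖ * v ^ 2 * (1 - α) := by
      apply integral_mono_on zero_le_one
      · exact hhcont.intervalIntegrable _ _
      · exact (huIcc ▸ hgcont).intervalIntegrable
      · exact hpt
    -- compute the lower integral
    have hrw2 : ∀ τ : ℝ, astar * (|τ - t0| * v) ^ β * v ^ 2 * (1 - α)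
        = (astar * v ^ β * v ^ 2 * (1 - α)) * |τ - t0| ^ β := by
      intro τ
      rw [Real.mul_rpow (abs_nonneg _) hv.le]
      ring
    have hlow : astar * v ^ β * v ^ 2 * (1 - α) * (((1:ℝ)/2) ^ (β+1) / (β+1))
        ≤ ∫ τ in (0:ℝ)..1, astar * (|τ - t0| * v) ^ β * v ^ 2 * (1 - α) := by
      have hC : 0 ≤ astar * v ^ β * v ^ 2 * (1 - α) := by
        have := Real.rpow_nonneg hv.le β
        positivity
      calc astar * v ^ β * v ^ 2 * (1 - α) * (((1:ℝ)/2) ^ (β+1) / (β+1))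
          ≤ (astar * v ^ β * v ^ 2 * (1 - α)) * ∫ τ in (0:ℝ)..1, |τ - t0| ^ β :=
            mul_le_mul_of_nonneg_left (abs_int β hβ.le t0) hC
        _ = ∫ τ in (0:ℝ)..1, (astar * v ^ β * v ^ 2 * (1 - α)) * |τ - t0| ^ β :=
            (intervalIntegral.integral_const_mul _ _).symm
        _ = ∫ τ in (0:ℝ)..1, astar * (|τ - t0| * v) ^ β * v ^ 2 * (1 - α) := by
            simp_rw [hrw2]
    -- identify the left-hand side
    have hLHS : astar * (1 - α) * v ^ (β + 2) / (2 ^ (β + 1) * (β + 1))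
        = astar * v ^ β * v ^ 2 * (1 - α) * (((1:ℝ)/2) ^ (β+1) / (β+1)) := by
      have hv2 : v ^ (β + 2) = v ^ β * v ^ 2 := by
        rw [Real.rpow_add hv β 2, Real.rpow_two]
      have hhalf : ((1:ℝ)/2) ^ (β+1) = 1 / 2 ^ (β+1) := by
        rw [Real.div_rpow (by norm_num) (by norm_num), Real.one_rpow]
      have h2p : (0:ℝ) < 2 ^ (β+1) := Real.rpow_pos_of_pos (by norm_num) _
      rw [hv2, hhalf]
      field_simp
    rw [hLHS]
    exact le_trans hlow hmonoInt
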